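/- Let s > 1/2. There exists C > 0 such that for all parameters λ₁, λ', λ'' > 0 and every φ in the anisotropic Sobolev space H^s_λ(T^d) (λ = (λ₁,λ',λ'')) whose partial Fourier coefficient in x₁ at frequency 0 vanishes (F_{x₁}φ(0, x', x'') = 0), the trace γ_a^Π φ of φ on the hypersurface Σ_a = {x₁ = a} × T^{d−1} satisfies ‖γ_a^Π φ‖_{H^{s−1/2}_{λ',λ''}(Σ_a)} ≤ C λ₁^{−1/2} ‖φ‖_{H^s_λ(T^d)}. -/

import Mathlib

open MeasureTheory Set Metric Filter
open scoped ContDiff RealInnerProductSpace ENNReal Real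

noncomputable section

instance : Fact ((0:ℝ) < 2) := ⟨by norm_num⟩

/-- Euclidean space `ℝ^n`. -/
abbrev Euc (n : ℕ) : Type := EuclideanSpace ℝ (Fin n)

/-- The model coordinate space `ℝ × ℝ^{d'} × ℝ^{d''}`. -/
abbrev Coord (d' d'' : ℕ) : Type := ℝ × Euc d' × Euc d''

/-- The circle `ℝ/2ℤ`. -/
abbrev Circ : Type := AddCircle (2:ℝ)

/-- The torus `T^d = (ℝ/2ℤ)^d`, split as `T × T^{d'} × T^{d''}`. -/
abbrev Tor (d' d'' : ℕ) : Type := Circ × (Fin d' → Circ) × (Fin d'' → Circ)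

/-- The euclidean distance-to-zero of a tuple of circle points. -/
def tnorm {n : ℕ} (v : Fin n → Circ) : ℝ := Real.sqrt (∑ i, ‖v i‖ ^ 2)

/-- `V_{∞,d} = ∫_{T^d} 1_{|y₁|<1, |y'|<1, |y''|<1} dy`. -/
def Vinf (d' d'' : ℕ) : ℝ :=
  (volume {y : Tor d' d'' | ‖y.1‖ < 1 ∧ tnorm y.2.1 < 1 ∧ tnorm y.2.2 < 1}).toReal

/-- The Dirichlet form `Ē_{h̄,h̃,h}` of the Metropolis operator on the torus. -/
def torForm (d' d'' : ℕ) (hb ht h : ℝ) (g : Tor d' d'' → ℝ) : ℝ≥0∞ :=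
  ENNReal.ofReal (2 * Vinf d' d'' * hb * ht ^ d' * h ^ d'')⁻¹ *
    ∫⁻ x : Tor d' d'', ∫⁻ y : Tor d' d'',
      if ‖x.1 - y.1‖ < hb ∧ tnorm (x.2.1 - y.2.1) < ht ∧ tnorm (x.2.2 - y.2.2) < h
      then ENNReal.ofReal ((g x - g y) ^ 2) else 0

/-- The unnormalized character `e^{iπ k·x}` on the torus `(ℝ/2ℤ)^d`. -/
def eRaw (d' d'' : ℕ) (k : ℤ × (Fin d' → ℤ) × (Fin d'' → ℤ)) (x : Tor d' d'') : ℂ :=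
  fourier k.1 x.1 * (∏ i, fourier (k.2.1 i) (x.2.1 i)) * ∏ j, fourier (k.2.2 j) (x.2.2 j)

/-- The Fourier coefficient `F φ(k) = 2^{-d/2} ∫_{T^d} e^{-iπ⟨x,k⟩} φ(x) dx`. -/
def fCoeff (d' d'' : ℕ) (φ : Tor d' d'' → ℂ) (k : ℤ × (Fin d' → ℤ) × (Fin d'' → ℤ)) : ℂ :=
  (((2:ℝ) ^ (-(((1 + d' + d'' : ℕ)) : ℝ) / 2) : ℝ) : ℂ) *
    ∫ x : Tor d' d'', (starRingEnd ℂ) (eRaw d' d'' k x) * φ x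

/-- The quantity `⟨λ·k⟩² = 1 + |λ₁k₁|² + |λ'k'|² + |λ''k''|²`. -/
def brkt (d' d'' : ℕ) (lam1 lam' lam'' : ℝ) (k : ℤ × (Fin d' → ℤ) × (Fin d'' → ℤ)) : ℝ :=
  1 + (lam1 * k.1) ^ 2 + lam' ^ 2 * (∑ i, ((k.2.1 i : ℝ)) ^ 2) +
    lam'' ^ 2 * ∑ j, ((k.2.2 j : ℝ)) ^ 2

/-- The squared anisotropic Sobolev norm
`‖φ‖²_{H^s_λ(T^d)} = Σ_k ⟨λ·k⟩^{2s} |F φ(k)|²`. -/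
def sobNormSq (d' d'' : ℕ) (s lam1 lam' lam'' : ℝ) (φ : Tor d' d'' → ℂ) : ℝ≥0∞ :=
  ∑' k : ℤ × (Fin d' → ℤ) × (Fin d'' → ℤ),
    ENNReal.ofReal (brkt d' d'' lam1 lam' lam'' k ^ s) * (‖fCoeff d' d'' φ k‖₊ : ℝ≥0∞) ^ 2

/-- The Fourier coefficients (in `(x',x'')`) of the trace `γ_a^Π φ` of `φ` on the
hypersurface `Σ_a = {x₁ = a} × T^{d-1}`:
`F_{x',x''}(γ_a^Π φ)(k',k'') = (1/√2) Σ_{k₁} e^{iπ k₁ a} F φ(k₁,k',k'')`. -/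
def traceCoeff (d' d'' : ℕ) (a : ℝ) (φ : Tor d' d'' → ℂ)
    (kt : (Fin d' → ℤ) × (Fin d'' → ℤ)) : ℂ :=
  ((Real.sqrt 2)⁻¹ : ℝ) *
    ∑' k₁ : ℤ, Complex.exp (Real.pi * Complex.I * (k₁ : ℂ) * (a : ℂ)) *
      fCoeff d' d'' φ (k₁, kt.1, kt.2)

/-- The squared anisotropic Sobolev norm `‖γ_a^Π φ‖²_{H^{s-1/2}_{λ',λ''}(Σ_a)}`. -/
def traceNormSq (d' d'' : ℕ) (s lam' lam'' : ℝ) (a : ℝ) (φ : Tor d' d'' → ℂ) : ℝ≥0∞ :=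
  ∑' kt : (Fin d' → ℤ) × (Fin d'' → ℤ),
    ENNReal.ofReal
      ((1 + lam' ^ 2 * (∑ i, ((kt.1 i : ℝ)) ^ 2) + lam'' ^ 2 * ∑ j, ((kt.2 j : ℝ)) ^ 2) ^
        (s - 1 / 2)) *
      (‖traceCoeff d' d'' a φ kt‖₊ : ℝ≥0∞) ^ 2


/-! ### Auxiliary lemmas -/

section AuxAnalytic

open scoped NNReal

variable {s : ℝ}

lemma myRLtOne (hs : 1/2 < s) : (2:ℝ) ^ ((1:ℝ) - 2*s) < 1 :=
  Real.rpow_lt_one_of_one_lt_of_neg one_lt_two (by linarith)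

lemma myRPos (s : ℝ) : (0:ℝ) < 2 ^ ((1:ℝ) - 2*s) := Real.rpow_pos_of_pos two_pos _

lemma myPowMulRpowEq (s : ℝ) (j : ℕ) :
    (2:ℝ)^j * ((2:ℝ)^j)^(-(2*s)) = ((2:ℝ) ^ ((1:ℝ) - 2*s))^j := by
  rw [← Real.rpow_natCast 2 j, ← Real.rpow_natCast ((2:ℝ) ^ ((1:ℝ)-2*s)) j,
    ← Real.rpow_mul (by norm_num), ← Real.rpow_mul (by norm_num), ← Real.rpow_add (by norm_num)]
  ring_nf

lemma myDyadicBound (hs : 1/2 < s) (lam M : ℝ) (hlam : 0 < lam) (hM : 1 ≤ M) :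
    (∑' j : ℕ, (2:ℝ≥0∞)^j * ENNReal.ofReal ((M + (lam*(2:ℝ)^j)^2) ^ (-s))) ≤
      ENNReal.ofReal ((2 + (1 - 2 ^ ((1:ℝ) - 2*s))⁻¹) * (lam⁻¹ * M ^ ((1:ℝ)/2 - s))) := by
  have hM0 : (0:ℝ) < M := by linarith
  set r : ℝ := (2:ℝ) ^ ((1:ℝ) - 2*s) with hrdef
  have hr0 : 0 < r := myRPos s
  have hr1 : r < 1 := myRLtOne hs
  have hsM : (0:ℝ) < Real.sqrt M := Real.sqrt_pos.mpr hM0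
  have hQ : (0:ℝ) < lam⁻¹ * M ^ ((1:ℝ)/2 - s) := by positivity
  have hex := pow_unbounded_of_one_lt (Real.sqrt M / lam) (one_lt_two (α := ℝ))
  set j₀ := Nat.find hex with hj₀def
  have hj₀ : Real.sqrt M / lam < 2 ^ j₀ := Nat.find_spec hex
  have hj₀min : ∀ j, j < j₀ → (2:ℝ) ^ j ≤ Real.sqrt M / lam := by
    intro j hj
    have := Nat.find_min hex hj
    linarith [not_lt.mp this]
  set T : ℕ → ℝ≥0∞ := fun j => (2:ℝ≥0∞)^j * ENNReal.ofReal ((M + (lam*(2:ℝ)^j)^2) ^ (-s)) with hTdef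
  have hsplit : ∑' j, T j = (∑ j ∈ Finset.range j₀, T j) + ∑' i, T (i + j₀) :=
    (Summable.sum_add_tsum_nat_add' ENNReal.summable).symm
  have htwo : ∀ j : ℕ, ((2:ℝ≥0∞))^j = ENNReal.ofReal ((2:ℝ)^j) := by
    intro j
    rw [ENNReal.ofReal_pow (by norm_num)]
    norm_num
  have hhead : (∑ j ∈ Finset.range j₀, T j) ≤ ENNReal.ofReal (2 * (lam⁻¹ * M ^ ((1:ℝ)/2 - s))) := by
    have hterm : ∀ j : ℕ, T j ≤ ENNReal.ofReal ((2:ℝ)^j * M ^ (-s)) := by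
      intro j
      rw [hTdef]
      simp only
      rw [htwo j, ← ENNReal.ofReal_mul (by positivity)]
      apply ENNReal.ofReal_le_ofReal
      apply mul_le_mul_of_nonneg_left _ (by positivity)
      apply Real.rpow_le_rpow_of_nonpos hM0 (by nlinarith [sq_nonneg (lam*(2:ℝ)^j)]) (by linarith)
    calc (∑ j ∈ Finset.range j₀, T j) ≤ ∑ j ∈ Finset.range j₀, ENNReal.ofReal ((2:ℝ)^j * M ^ (-s)) :=
          Finset.sum_le_sum (fun j _ => hterm j)
      _ = ENNReal.ofReal (∑ j ∈ Finset.range j₀, (2:ℝ)^j * M ^ (-s)) := by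
          rw [ENNReal.ofReal_sum_of_nonneg]
          intro j _
          positivity
      _ ≤ ENNReal.ofReal (2 * (lam⁻¹ * M ^ ((1:ℝ)/2 - s))) := by
          apply ENNReal.ofReal_le_ofReal
          rw [← Finset.sum_mul, geom_sum_eq (by norm_num) j₀]
          have h1 : ((2:ℝ)^j₀ - 1)/(2-1) = (2:ℝ)^j₀ - 1 := by norm_num
          rw [h1]
          have hle : (2:ℝ)^j₀ - 1 ≤ 2 * (Real.sqrt M / lam) := by
            rcases Nat.eq_zero_or_pos j₀ with h0 | hpos
            · rw [h0]; simp; positivity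
            · have := hj₀min (j₀ - 1) (by omega)
              have h2 : (2:ℝ)^j₀ = 2 * (2:ℝ)^(j₀-1) := by
                rw [← pow_succ']
                congr 1
                omega
              nlinarith
          have hid : Real.sqrt M * M ^ (-s) = M ^ ((1:ℝ)/2 - s) := by
            rw [Real.sqrt_eq_rpow, ← Real.rpow_add hM0]
            ring_nf
          have hMs : (0:ℝ) < M ^ (-s) := Real.rpow_pos_of_pos hM0 _
          calc ((2:ℝ)^j₀ - 1) * M ^ (-s) ≤ (2 * (Real.sqrt M / lam)) * M ^ (-s) :=
                mul_le_mul_of_nonneg_right hle hMs.le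
            _ = 2 * (lam⁻¹ * M ^ ((1:ℝ)/2 - s)) := by
                rw [← hid]; field_simp
  have htail : (∑' i, T (i + j₀)) ≤
      ENNReal.ofReal ((1 - r)⁻¹ * (lam⁻¹ * M ^ ((1:ℝ)/2 - s))) := by
    have hterm : ∀ j : ℕ, T j ≤ ENNReal.ofReal (lam ^ (-(2*s)) * r^j) := by
      intro j
      rw [hTdef]
      simp only
      rw [htwo j, ← ENNReal.ofReal_mul (by positivity)]
      apply ENNReal.ofReal_le_ofReal
      have hx : (0:ℝ) < lam * (2:ℝ)^j := by positivity
      have h1 : (M + (lam*(2:ℝ)^j)^2) ^ (-s) ≤ ((lam*(2:ℝ)^j)^2) ^ (-s) :=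
        Real.rpow_le_rpow_of_nonpos (by positivity) (by linarith) (by linarith)
      have h2 : ((lam*(2:ℝ)^j)^2 : ℝ) ^ (-s) = (lam*(2:ℝ)^j) ^ (-(2*s)) := by
        rw [← Real.rpow_natCast (lam*(2:ℝ)^j) 2, ← Real.rpow_mul hx.le]
        norm_num
      have h3 : (lam*(2:ℝ)^j) ^ (-(2*s)) = lam ^ (-(2*s)) * ((2:ℝ)^j) ^ (-(2*s)) :=
        Real.mul_rpow hlam.le (by positivity)
      calc (2:ℝ)^j * (M + (lam*(2:ℝ)^j)^2) ^ (-s)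
          ≤ (2:ℝ)^j * ((lam*(2:ℝ)^j)^2) ^ (-s) := by
            apply mul_le_mul_of_nonneg_left h1 (by positivity)
        _ = lam ^ (-(2*s)) * ((2:ℝ)^j * ((2:ℝ)^j) ^ (-(2*s))) := by rw [h2, h3]; ring
        _ = lam ^ (-(2*s)) * r^j := by rw [myPowMulRpowEq]
    calc (∑' i, T (i + j₀)) ≤ ∑' i : ℕ, ENNReal.ofReal (lam ^ (-(2*s)) * r^(i + j₀)) :=
          ENNReal.tsum_le_tsum (fun i => hterm (i + j₀))
      _ = ∑' i : ℕ, ENNReal.ofReal (lam ^ (-(2*s)) * r^j₀) * (ENNReal.ofReal r)^i := by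
          apply tsum_congr; intro i
          rw [← ENNReal.ofReal_pow hr0.le, ← ENNReal.ofReal_mul (by positivity)]
          congr 1
          rw [pow_add]
          ring
      _ = ENNReal.ofReal (lam ^ (-(2*s)) * r^j₀) * (1 - ENNReal.ofReal r)⁻¹ := by
          rw [ENNReal.tsum_mul_left, ENNReal.tsum_geometric]
      _ ≤ ENNReal.ofReal ((1 - r)⁻¹ * (lam⁻¹ * M ^ ((1:ℝ)/2 - s))) := by
          have e1 : (1 : ℝ≥0∞) - ENNReal.ofReal r = ENNReal.ofReal (1 - r) := by
            rw [ENNReal.ofReal_sub 1 hr0.le, ENNReal.ofReal_one]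
          rw [e1, ← ENNReal.ofReal_inv_of_pos (by linarith), ← ENNReal.ofReal_mul (by positivity)]
          apply ENNReal.ofReal_le_ofReal
          rw [mul_comm]
          apply mul_le_mul_of_nonneg_left _ (inv_nonneg.mpr (by linarith))
          have hrj2 : r ^ j₀ = ((2:ℝ)^j₀ : ℝ) ^ ((1:ℝ) - 2*s) := by
            rw [← Real.rpow_natCast ((2:ℝ)) j₀, ← Real.rpow_mul (by norm_num),
              ← Real.rpow_natCast (r) j₀, hrdef, ← Real.rpow_mul (by norm_num)]
            ring_nf
          have hmono : ((2:ℝ)^j₀ : ℝ) ^ ((1:ℝ) - 2*s) ≤ (Real.sqrt M / lam) ^ ((1:ℝ) - 2*s) :=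
            Real.rpow_le_rpow_of_nonpos (by positivity) hj₀.le (by linarith)
          have h5 : lam ^ (-(2*s)) / lam ^ ((1:ℝ)-2*s) = lam⁻¹ := by
            rw [← Real.rpow_sub hlam, show -(2*s) - (1-2*s) = (-1:ℝ) by ring, Real.rpow_neg_one]
          have hfin : lam ^ (-(2*s)) * (Real.sqrt M / lam) ^ ((1:ℝ) - 2*s) =
              lam⁻¹ * M ^ ((1:ℝ)/2 - s) := by
            rw [Real.div_rpow (Real.sqrt_nonneg M) hlam.le, Real.sqrt_eq_rpow,
              ← Real.rpow_mul hM0.le]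
            calc lam ^ (-(2*s)) * (M ^ ((1:ℝ)/2*(1-2*s)) / lam ^ ((1:ℝ)-2*s))
                = (lam ^ (-(2*s)) / lam ^ ((1:ℝ)-2*s)) * M ^ ((1:ℝ)/2*(1-2*s)) := by ring
              _ = lam⁻¹ * M ^ ((1:ℝ)/2-s) := by
                  rw [h5, show (1:ℝ)/2*(1-2*s) = 1/2-s by ring]
          calc lam ^ (-(2*s)) * r ^ j₀
              = lam ^ (-(2*s)) * ((2:ℝ)^j₀) ^ ((1:ℝ)-2*s) := by rw [hrj2]
            _ ≤ lam ^ (-(2*s)) * (Real.sqrt M / lam) ^ ((1:ℝ)-2*s) := by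
                apply mul_le_mul_of_nonneg_left hmono (by positivity)
            _ = lam⁻¹ * M ^ ((1:ℝ)/2-s) := hfin
  rw [hsplit]
  refine le_trans (add_le_add hhead htail) ?_
  rw [← ENNReal.ofReal_add (by positivity) (mul_nonneg (inv_nonneg.mpr (by linarith)) hQ.le)]
  apply ENNReal.ofReal_le_ofReal
  have : (2 + (1-r)⁻¹) * (lam⁻¹ * M ^ ((1:ℝ)/2 - s)) =
      2 * (lam⁻¹ * M ^ ((1:ℝ)/2 - s)) + (1-r)⁻¹ * (lam⁻¹ * M ^ ((1:ℝ)/2 - s)) := by ring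
  rw [this]

/-- The constant in the trace estimate. -/
def myC0 (s : ℝ) : ℝ := 2 * (2 + (1 - 2 ^ ((1:ℝ) - 2*s))⁻¹)

lemma myC0_pos (hs : 1/2 < s) : 0 < myC0 s := by
  have h1 := myRLtOne hs
  have h2 := myRPos s
  have h3 : 0 < 1 - (2:ℝ) ^ ((1:ℝ) - 2*s) := by linarith
  have : 0 < (1 - (2:ℝ) ^ ((1:ℝ) - 2*s))⁻¹ := inv_pos.mpr h3
  unfold myC0; nlinarith

lemma myZsumEq {F : ℤ → ℝ≥0∞} (hev : ∀ n : ℕ, F (-(n+1)) = F (n+1)) (h0 : F 0 = 0) :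
    ∑' k : ℤ, F k = 2 * ∑' n : ℕ, F n := by
  rw [tsum_of_nat_of_neg_add_one ENNReal.summable ENNReal.summable]
  have e2 : ∑' n : ℕ, F (-(n+1)) = ∑' n : ℕ, F (n+1) := tsum_congr hev
  have e3 : ∑' n : ℕ, F ((n:ℕ)+1) = ∑' n : ℕ, F (n:ℕ) := by
    conv_rhs => rw [tsum_eq_zero_add' ENNReal.summable]
    norm_num [h0]
  rw [e2]
  push_cast
  rw [e3, two_mul]

lemma myLemA (hs : 1/2 < s) (lam M : ℝ) (hlam : 0 < lam) (hM : 1 ≤ M) :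
    (∑' k : ℤ, (if k = 0 then 0 else ENNReal.ofReal ((M + (lam*k)^2) ^ (-s)))) ≤
      ENNReal.ofReal (myC0 s * (lam⁻¹ * M ^ ((1:ℝ)/2 - s))) := by
  have hM0 : (0:ℝ) < M := by linarith
  have hzsum : (∑' k : ℤ, (if k = 0 then 0 else ENNReal.ofReal ((M + (lam*k)^2) ^ (-s)))) =
      2 * ∑' n : ℕ, (if n = 0 then 0 else ENNReal.ofReal ((M + (lam*n)^2) ^ (-s))) := by
    have h := myZsumEq (F := fun k : ℤ => if k = 0 then 0 else ENNReal.ofReal ((M + (lam*k)^2) ^ (-s)))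
      (fun n => by
        have hne : (-((n:ℤ)+1)) ≠ 0 := by omega
        have hne' : ((n:ℤ)+1) ≠ 0 := by omega
        simp only [if_neg hne, if_neg hne']
        congr 3
        push_cast
        ring) (by simp)
    rw [h]
    congr 1
    apply tsum_congr
    intro n
    by_cases h : n = 0
    · simp [h]
    · have hz : (n:ℤ) ≠ 0 := by exact_mod_cast h
      simp only [if_neg h, if_neg hz]
      norm_num
  rw [hzsum]
  set g : ℕ → ℝ≥0∞ := fun n => if n = 0 then 0 else ENNReal.ofReal ((M + (lam*n)^2) ^ (-s)) with hgdef
  have hanti : ∀ ⦃m n : ℕ⦄, 0 < m → m ≤ n → g n ≤ g m := by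
    intro m n hm hmn
    have hm0 : m ≠ 0 := by omega
    have hn0 : n ≠ 0 := by omega
    simp only [hgdef, if_neg hm0, if_neg hn0]
    apply ENNReal.ofReal_le_ofReal
    apply Real.rpow_le_rpow_of_nonpos (by positivity) _ (by linarith)
    have h1 : (m:ℝ) ≤ (n:ℝ) := by exact_mod_cast hmn
    have h2 : 0 ≤ lam * m := by positivity
    have h3 : lam * m ≤ lam * n := by nlinarith
    nlinarith [mul_self_le_mul_self h2 h3]
  have hcond := ENNReal.le_tsum_condensed hanti
  have hg0 : g 0 = 0 := by simp [hgdef]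
  rw [hg0, zero_add] at hcond
  have hdy : ∑' j : ℕ, (2:ℝ≥0∞)^j * g (2^j) =
      ∑' j : ℕ, (2:ℝ≥0∞)^j * ENNReal.ofReal ((M + (lam*(2:ℝ)^j)^2) ^ (-s)) := by
    apply tsum_congr
    intro j
    congr 1
    have hne : (2:ℕ)^j ≠ 0 := by positivity
    simp only [hgdef, if_neg hne]
    norm_num
  rw [hdy] at hcond
  calc 2 * ∑' n : ℕ, g n
      ≤ 2 * ∑' j : ℕ, (2:ℝ≥0∞)^j * ENNReal.ofReal ((M + (lam*(2:ℝ)^j)^2) ^ (-s)) := by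
        exact mul_le_mul_right hcond 2
    _ ≤ 2 * ENNReal.ofReal ((2 + (1 - 2 ^ ((1:ℝ) - 2*s))⁻¹) * (lam⁻¹ * M ^ ((1:ℝ)/2 - s))) :=
        mul_le_mul_right (myDyadicBound hs lam M hlam hM) 2
    _ = ENNReal.ofReal (myC0 s * (lam⁻¹ * M ^ ((1:ℝ)/2 - s))) := by
        rw [show (2:ℝ≥0∞) = ENNReal.ofReal 2 by norm_num, ← ENNReal.ofReal_mul (by norm_num)]
        congr 1
        unfold myC0
        ring

lemma myEnormTsum (f : ℤ → ℂ) : (‖∑' k, f k‖₊ : ℝ≥0∞) ≤ ∑' k, (‖f k‖₊ : ℝ≥0∞) := by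
  by_cases h : Summable fun k => ‖f k‖
  · have hsm : Summable fun k => ‖f k‖₊ := by
      rw [← NNReal.summable_coe]
      exact h
    calc (‖∑' k, f k‖₊ : ℝ≥0∞) ≤ (((∑' k, ‖f k‖₊) : ℝ≥0) : ℝ≥0∞) :=
          ENNReal.coe_le_coe.mpr (nnnorm_tsum_le hsm)
      _ = ∑' k, (‖f k‖₊ : ℝ≥0∞) := ENNReal.coe_tsum hsm
  · have : ¬ Summable f := fun hf => h (summable_norm_iff.mpr hf)
    rw [tsum_eq_zero_of_not_summable this]
    simp

lemma myCS (u v : ℤ → ℝ≥0∞) :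
    (∑' k, u k * v k)^2 ≤ (∑' k, (u k)^2) * (∑' k, (v k)^2) := by
  have hpq : Real.HolderConjugate 2 2 := by
    constructor <;> norm_num
  have h := ENNReal.lintegral_mul_le_Lp_mul_Lq (MeasureTheory.Measure.count (α := ℤ)) hpq
    (f := u) (g := v) (measurable_of_countable u).aemeasurable (measurable_of_countable v).aemeasurable
  rw [lintegral_count, lintegral_count, lintegral_count] at h
  have h2 : ∑' k, u k * v k ≤ (∑' k, (u k)^2)^((1:ℝ)/2) * (∑' k, (v k)^2)^((1:ℝ)/2) := by
    convert h using 3 <;>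
    · try rw [← ENNReal.rpow_natCast]
      norm_num
  calc (∑' k, u k * v k)^2 ≤ ((∑' k, (u k)^2)^((1:ℝ)/2) * (∑' k, (v k)^2)^((1:ℝ)/2))^2 := by
        exact pow_le_pow_left' h2 2
    _ = (∑' k, (u k)^2) * (∑' k, (v k)^2) := by
        rw [mul_pow, ← ENNReal.rpow_natCast (_ ^ ((1:ℝ)/2)) 2, ← ENNReal.rpow_natCast (_ ^ ((1:ℝ)/2)) 2,
          ← ENNReal.rpow_mul, ← ENNReal.rpow_mul]
        norm_num

lemma myPerkt (hs : 1/2 < s) (lam M : ℝ) (hlam : 0 < lam) (hM : 1 ≤ M)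
    (c : ℤ → ℝ≥0∞) (hc0 : c 0 = 0) :
    (∑' k : ℤ, c k)^2 ≤ ENNReal.ofReal (myC0 s * (lam⁻¹ * M ^ ((1:ℝ)/2 - s))) *
      ∑' k : ℤ, ENNReal.ofReal ((M + (lam*k)^2) ^ s) * (c k)^2 := by
  have hM0 : (0:ℝ) < M := by linarith
  set u : ℤ → ℝ≥0∞ := fun k => if k = 0 then 0 else ENNReal.ofReal ((M + (lam*k)^2) ^ (-(s/2))) with hu
  set v : ℤ → ℝ≥0∞ := fun k => ENNReal.ofReal ((M + (lam*k)^2) ^ (s/2)) * c k with hv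
  have hbase : ∀ k : ℤ, (0:ℝ) < M + (lam*k)^2 := fun k => by positivity
  have huv : ∀ k, u k * v k = c k := by
    intro k
    by_cases h : k = 0
    · simp [hu, hv, h, hc0]
    · simp only [hu, hv, if_neg h]
      rw [← mul_assoc, ← ENNReal.ofReal_mul (by positivity),
        ← Real.rpow_add (hbase k), show -(s/2) + s/2 = (0:ℝ) by ring, Real.rpow_zero,
        ENNReal.ofReal_one, one_mul]
  have hu2 : ∀ k, (u k)^2 = (if k = 0 then 0 else ENNReal.ofReal ((M + (lam*k)^2) ^ (-s))) := by
    intro k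
    by_cases h : k = 0
    · simp [hu, h]
    · simp only [hu, if_neg h]
      rw [← ENNReal.ofReal_pow (by positivity), ← Real.rpow_natCast (_ ^ (-(s/2))) 2,
        ← Real.rpow_mul (hbase k).le]
      norm_num
  have hv2 : ∀ k, (v k)^2 = ENNReal.ofReal ((M + (lam*k)^2) ^ s) * (c k)^2 := by
    intro k
    simp only [hv]
    rw [mul_pow, ← ENNReal.ofReal_pow (by positivity), ← Real.rpow_natCast (_ ^ (s/2)) 2,
      ← Real.rpow_mul (hbase k).le]
    norm_num
  calc (∑' k : ℤ, c k)^2 = (∑' k : ℤ, u k * v k)^2 := by rw [tsum_congr huv]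
    _ ≤ (∑' k, (u k)^2) * (∑' k, (v k)^2) := myCS u v
    _ ≤ ENNReal.ofReal (myC0 s * (lam⁻¹ * M ^ ((1:ℝ)/2 - s))) *
          ∑' k : ℤ, ENNReal.ofReal ((M + (lam*k)^2) ^ s) * (c k)^2 := by
        rw [tsum_congr hu2, tsum_congr hv2]
        exact mul_le_mul_left (myLemA hs lam M hlam hM) _

end AuxAnalytic

lemma myFCoeffZero (d' d'' : ℕ) (φ : Tor d' d'' → ℂ) (hφ : MemLp φ 2 volume)
    (hz : ∀ᵐ p : (Fin d' → Circ) × (Fin d'' → Circ),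
      (∫ t : Circ, φ (t, p.1, p.2)) = 0)
    (k' : Fin d' → ℤ) (k'' : Fin d'' → ℤ) : fCoeff d' d'' φ (0, k', k'') = 0 := by
  set E : (Fin d' → Circ) × (Fin d'' → Circ) → ℂ :=
    fun p => (∏ i, fourier (k' i) (p.1 i)) * ∏ j, fourier (k'' j) (p.2 j) with hE
  have hEcont : Continuous E := by
    apply Continuous.mul
    · apply continuous_finset_prod
      intro i _
      exact (fourier (k' i)).continuous.comp ((continuous_apply i).comp continuous_fst)
    · apply continuous_finset_prod
      intro j _
      exact (fourier (k'' j)).continuous.comp ((continuous_apply j).comp continuous_snd)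
  have hEnorm : ∀ p, ‖(starRingEnd ℂ) (E p)‖ ≤ 1 := by
    intro p
    rw [RCLike.norm_conj]
    have h1 : ∀ (n : ℤ) (x : Circ), ‖fourier n x‖ = 1 := fun n x => Circle.norm_coe _
    simp only [hE, norm_mul]
    rw [norm_prod, norm_prod]
    simp [h1, Circle.norm_coe]
  have hint : Integrable φ volume := hφ.integrable (by norm_num)
  have heq : ∀ x : Tor d' d'', (starRingEnd ℂ) (eRaw d' d'' (0, k', k'') x) * φ x
      = (starRingEnd ℂ) (E x.2) * φ x := by
    intro x
    simp [eRaw, hE, fourier_zero]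
  have hOMS : OpensMeasurableSpace (Tor d' d'') := by
    constructor
    exact (Prod.opensMeasurableSpace (α := Circ)
      (β := (Fin d' → Circ) × (Fin d'' → Circ))).borel_le
  have hmeas : AEStronglyMeasurable (fun x : Tor d' d'' => (starRingEnd ℂ) (E x.2))
      (volume : Measure (Tor d' d'')) :=
    (continuous_star.comp (hEcont.comp continuous_snd)).aestronglyMeasurable
  have hg : Integrable (fun x : Tor d' d'' => (starRingEnd ℂ) (E x.2) * φ x) volume := by
    apply Integrable.bdd_mul (c := 1) hint hmeas
    exact Filter.Eventually.of_forall fun x => hEnorm x.2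
  have hmain : (∫ x : Tor d' d'', (starRingEnd ℂ) (eRaw d' d'' (0, k', k'') x) * φ x) = 0 := by
    rw [integral_congr_ae (Filter.Eventually.of_forall heq)]
    rw [Measure.volume_eq_prod] at hg ⊢
    rw [integral_prod _ hg]
    rw [integral_integral_swap (by exact hg)]
    have : ∀ᵐ p : (Fin d' → Circ) × (Fin d'' → Circ),
        (∫ t : Circ, (starRingEnd ℂ) (E p) * φ (t, p)) = 0 := by
      filter_upwards [hz] with p hp
      rw [integral_const_mul]
      rw [show (fun t : Circ => φ (t, p)) = (fun t : Circ => φ (t, p.1, p.2)) from rfl, hp, mul_zero]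
    rw [integral_congr_ae this, integral_zero]
  rw [fCoeff, hmain, mul_zero]

theorem statement18 (d' d'' : ℕ) (s : ℝ) (hs : 1 / 2 < s) :
    ∃ C : ℝ, 0 < C ∧
      ∀ lam1 lam' lam'' : ℝ, 0 < lam1 → 0 < lam' → 0 < lam'' →
        ∀ a : ℝ, ∀ φ : Tor d' d'' → ℂ, MemLp φ 2 volume →
          sobNormSq d' d'' s lam1 lam' lam'' φ ≠ ⊤ →
          -- the partial Fourier coefficient `F_{x₁} φ(0, x', x'')` vanishes
          (∀ᵐ p : (Fin d' → Circ) × (Fin d'' → Circ),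
            (∫ t : Circ, φ (t, p.1, p.2)) = 0) →
          traceNormSq d' d'' s lam' lam'' a φ ≤
            ENNReal.ofReal (C ^ 2 * lam1⁻¹) *
              sobNormSq d' d'' s lam1 lam' lam'' φ := by
  refine ⟨Real.sqrt (myC0 s), Real.sqrt_pos.mpr (myC0_pos hs), ?_⟩
  intro lam1 lam' lam'' h1 h2 h3 a φ hφ hsob hz
  have key : ∀ kt : (Fin d' → ℤ) × (Fin d'' → ℤ),
      ENNReal.ofReal
        ((1 + lam' ^ 2 * (∑ i, ((kt.1 i : ℝ)) ^ 2) + lam'' ^ 2 * ∑ j, ((kt.2 j : ℝ)) ^ 2) ^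
          (s - 1 / 2)) * (‖traceCoeff d' d'' a φ kt‖₊ : ℝ≥0∞) ^ 2
      ≤ ENNReal.ofReal (myC0 s * lam1⁻¹) *
        ∑' k₁ : ℤ, ENNReal.ofReal (brkt d' d'' lam1 lam' lam'' (k₁, kt.1, kt.2) ^ s) *
          (‖fCoeff d' d'' φ (k₁, kt.1, kt.2)‖₊ : ℝ≥0∞) ^ 2 := by
    intro kt
    set M : ℝ := 1 + lam' ^ 2 * (∑ i, ((kt.1 i : ℝ)) ^ 2) + lam'' ^ 2 * ∑ j, ((kt.2 j : ℝ)) ^ 2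
      with hMdef
    have hsum1 : (0:ℝ) ≤ ∑ i, ((kt.1 i : ℝ)) ^ 2 := by positivity
    have hsum2 : (0:ℝ) ≤ ∑ j, ((kt.2 j : ℝ)) ^ 2 := by positivity
    have hM1 : 1 ≤ M := by
      rw [hMdef]
      nlinarith [sq_nonneg lam', sq_nonneg lam'', mul_nonneg (sq_nonneg lam') hsum1,
        mul_nonneg (sq_nonneg lam'') hsum2]
    have hM0 : (0:ℝ) < M := by linarith
    set c : ℤ → ℝ≥0∞ := fun k => (‖fCoeff d' d'' φ (k, kt.1, kt.2)‖₊ : ℝ≥0∞) with hc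
    have hc0 : c 0 = 0 := by
      rw [hc]
      simp only
      rw [myFCoeffZero d' d'' φ hφ hz kt.1 kt.2]
      simp
    -- step 1 : bound the trace coefficient
    have htc : (‖traceCoeff d' d'' a φ kt‖₊ : ℝ≥0∞) ≤ ∑' k : ℤ, c k := by
      rw [traceCoeff]
      have hstep : (‖((((Real.sqrt 2)⁻¹ : ℝ) : ℂ)) *
          ∑' k₁ : ℤ, Complex.exp (Real.pi * Complex.I * (k₁ : ℂ) * (a : ℂ)) *
            fCoeff d' d'' φ (k₁, kt.1, kt.2)‖₊ : ℝ≥0∞)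
          ≤ (‖∑' k₁ : ℤ, Complex.exp (Real.pi * Complex.I * (k₁ : ℂ) * (a : ℂ)) *
            fCoeff d' d'' φ (k₁, kt.1, kt.2)‖₊ : ℝ≥0∞) := by
        rw [nnnorm_mul, ENNReal.coe_mul]
        have hr : (‖(((Real.sqrt 2)⁻¹ : ℝ) : ℂ)‖₊ : ℝ≥0∞) ≤ 1 := by
          have hs2 : (1:ℝ) ≤ Real.sqrt 2 := by
            rw [show (1:ℝ) = Real.sqrt 1 by simp]
            exact Real.sqrt_le_sqrt (by norm_num)
          have h2 : ‖(((Real.sqrt 2)⁻¹ : ℝ) : ℂ)‖ ≤ 1 := by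
            rw [Complex.norm_real, Real.norm_eq_abs, abs_of_nonneg (by positivity)]
            calc (Real.sqrt 2)⁻¹ ≤ 1⁻¹ := by
                  apply inv_anti₀ one_pos hs2
              _ = 1 := by norm_num
          calc (‖(((Real.sqrt 2)⁻¹ : ℝ) : ℂ)‖₊ : ℝ≥0∞) ≤ ((1 : NNReal) : ℝ≥0∞) := by
                exact_mod_cast h2
            _ = 1 := by norm_num
        calc (‖(((Real.sqrt 2)⁻¹ : ℝ) : ℂ)‖₊ : ℝ≥0∞) * _ ≤ 1 * _ := mul_le_mul_left hr _
          _ = _ := one_mul _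
      refine hstep.trans ((myEnormTsum _).trans ?_)
      apply le_of_eq
      apply tsum_congr
      intro k₁
      rw [nnnorm_mul]
      have hexp : ‖Complex.exp (Real.pi * Complex.I * (k₁ : ℂ) * (a : ℂ))‖₊ = 1 := by
        apply NNReal.coe_injective
        rw [coe_nnnorm]
        rw [Complex.norm_exp]
        have : ((Real.pi : ℂ) * Complex.I * (k₁ : ℂ) * (a : ℂ)).re = 0 := by
          simp [Complex.mul_re, Complex.mul_im]
        rw [this, Real.exp_zero]
        norm_num
      rw [hexp, one_mul, hc]
    have htc2 : (‖traceCoeff d' d'' a φ kt‖₊ : ℝ≥0∞) ^ 2 ≤ (∑' k : ℤ, c k) ^ 2 :=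
      pow_le_pow_left' htc 2
    have hcs := myPerkt hs lam1 M h1 hM1 c hc0
    have hbr : ∀ k : ℤ, M + (lam1 * k)^2 = brkt d' d'' lam1 lam' lam'' (k, kt.1, kt.2) := by
      intro k
      simp only [brkt, hMdef]
      ring
    have hrpow1 : M ^ (s - 1/2) * (myC0 s * (lam1⁻¹ * M ^ ((1:ℝ)/2 - s))) = myC0 s * lam1⁻¹ := by
      have hMM : M ^ (s - 1/2) * M ^ ((1:ℝ)/2 - s) = 1 := by
        rw [← Real.rpow_add hM0, show s - 1/2 + ((1:ℝ)/2 - s) = 0 by ring, Real.rpow_zero]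
      calc M ^ (s - 1/2) * (myC0 s * (lam1⁻¹ * M ^ ((1:ℝ)/2 - s)))
          = (M ^ (s - 1/2) * M ^ ((1:ℝ)/2 - s)) * (myC0 s * lam1⁻¹) := by ring
        _ = myC0 s * lam1⁻¹ := by rw [hMM, one_mul]
    calc ENNReal.ofReal (M ^ (s - 1/2)) * (‖traceCoeff d' d'' a φ kt‖₊ : ℝ≥0∞) ^ 2
        ≤ ENNReal.ofReal (M ^ (s - 1/2)) * (∑' k : ℤ, c k) ^ 2 := mul_le_mul_right htc2 _
      _ ≤ ENNReal.ofReal (M ^ (s - 1/2)) * (ENNReal.ofReal (myC0 s * (lam1⁻¹ * M ^ ((1:ℝ)/2 - s))) *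
            ∑' k : ℤ, ENNReal.ofReal ((M + (lam1*k)^2) ^ s) * (c k)^2) := mul_le_mul_right hcs _
      _ = ENNReal.ofReal (myC0 s * lam1⁻¹) *
            ∑' k : ℤ, ENNReal.ofReal ((M + (lam1*k)^2) ^ s) * (c k)^2 := by
          rw [← mul_assoc, ← ENNReal.ofReal_mul (by positivity), hrpow1]
      _ = ENNReal.ofReal (myC0 s * lam1⁻¹) *
          ∑' k₁ : ℤ, ENNReal.ofReal (brkt d' d'' lam1 lam' lam'' (k₁, kt.1, kt.2) ^ s) *
            (‖fCoeff d' d'' φ (k₁, kt.1, kt.2)‖₊ : ℝ≥0∞) ^ 2 := by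
          congr 1
          apply tsum_congr
          intro k
          rw [hbr k, hc]
  have hsob' : sobNormSq d' d'' s lam1 lam' lam'' φ =
      ∑' kt : (Fin d' → ℤ) × (Fin d'' → ℤ), ∑' k₁ : ℤ,
        ENNReal.ofReal (brkt d' d'' lam1 lam' lam'' (k₁, kt.1, kt.2) ^ s) *
          (‖fCoeff d' d'' φ (k₁, kt.1, kt.2)‖₊ : ℝ≥0∞) ^ 2 := by
    rw [sobNormSq, ENNReal.tsum_prod', ENNReal.tsum_comm]
  have hCeq : ENNReal.ofReal (myC0 s * lam1⁻¹) =
      ENNReal.ofReal (Real.sqrt (myC0 s) ^ 2 * lam1⁻¹) := by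
    rw [Real.sq_sqrt (myC0_pos hs).le]
  calc traceNormSq d' d'' s lam' lam'' a φ
      ≤ ∑' kt : (Fin d' → ℤ) × (Fin d'' → ℤ), ENNReal.ofReal (myC0 s * lam1⁻¹) *
          ∑' k₁ : ℤ, ENNReal.ofReal (brkt d' d'' lam1 lam' lam'' (k₁, kt.1, kt.2) ^ s) *
            (‖fCoeff d' d'' φ (k₁, kt.1, kt.2)‖₊ : ℝ≥0∞) ^ 2 := by
        rw [traceNormSq]
        exact ENNReal.tsum_le_tsum key
    _ = ENNReal.ofReal (myC0 s * lam1⁻¹) * sobNormSq d' d'' s lam1 lam' lam'' φ := by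
        rw [ENNReal.tsum_mul_left, hsob']
    _ = ENNReal.ofReal (Real.sqrt (myC0 s) ^ 2 * lam1⁻¹) * sobNormSq d' d'' s lam1 lam' lam'' φ := by
        rw [hCeq]
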